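/- (Duhamel decay for damped ODE) Let c > 0 and let y: [0, ∞) → ℝ be continuous, nonnegative, and satisfy y(t) ≤ e^{−ct} y(0) + ∫_0^t e^{−c(t−τ)} (A (1+τ)^{−3/4} + ε (1+τ)^{−1/2} y(τ)) dτ for all t ≥ 0, where A ≥ 0 and ε ≥ 0. Then there exist constants C > 0 and ε₀ > 0 depending only on c such that if ε ≤ ε₀, then y(t) ≤ C (y(0) + A) (1+t)^{−3/4} for all t ≥ 0. -/

import Mathlib

open Real

lemma expIntEq (c t a b : ℝ) (hc : 0 < c) :
    ∫ τ in a..b, Real.exp (-c*(t-τ)) =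
      (Real.exp (-c*(t-b)) - Real.exp (-c*(t-a)))/c := by
  have h : ∀ τ : ℝ, HasDerivAt (fun τ => Real.exp (-c*(t-τ)) / c) (Real.exp (-c*(t-τ))) τ := by
    intro τ
    have h1 : HasDerivAt (fun τ : ℝ => -c*(t-τ)) c τ := by
      have := ((hasDerivAt_id τ).const_sub t).const_mul (-c)
      simpa using this
    have h2 := (h1.exp).div_const c
    rwa [mul_div_assoc, div_self hc.ne', mul_one] at h2
  rw [intervalIntegral.integral_eq_sub_of_hasDerivAt (fun τ _ => h τ)
    ((Real.continuous_exp.comp (by continuity)).intervalIntegrable a b)]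
  ring

lemma convInteg (c t a b : ℝ) (ha : 0 ≤ a) (hab : a ≤ b) :
    IntervalIntegrable (fun τ => Real.exp (-c*(t-τ)) * (1+τ)^(-(3/4:ℝ))) MeasureTheory.volume a b := by
  apply ContinuousOn.intervalIntegrable
  apply ContinuousOn.mul (Continuous.continuousOn (by continuity))
  apply ContinuousOn.rpow_const ((continuous_const.add continuous_id).continuousOn)
  intro x hx
  rw [Set.uIcc_of_le hab] at hx
  have hx0 : 0 ≤ x := le_trans ha hx.1
  left
  simp only [Pi.add_apply, id_eq]
  intro h; linarith

lemma convBound (c : ℝ) (hc : 0 < c) (t : ℝ) (ht : 0 ≤ t) :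
    ∫ τ in (0:ℝ)..t, Real.exp (-c*(t-τ)) * (1+τ)^(-(3/4:ℝ)) ≤
      (1/(c * min 1 (c/2)) + 2/c) * (1+t)^(-(3/4:ℝ)) := by
  set m := min 1 (c/2) with hm
  have hm0 : 0 < m := lt_min one_pos (by linarith)
  have hm1 : m ≤ 1 := min_le_left _ _
  have hm2 : m ≤ c/2 := min_le_right _ _
  have h1t : (0:ℝ) < 1 + t := by linarith
  have hrp : (0:ℝ) < (1+t)^((3:ℝ)/4) := rpow_pos_of_pos h1t _
  have hr : 0 < (1+t)^(-(3/4:ℝ)) := rpow_pos_of_pos h1t _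
  have hsplit : (∫ τ in (0:ℝ)..t, Real.exp (-c*(t-τ)) * (1+τ)^(-(3/4:ℝ))) =
      (∫ τ in (0:ℝ)..(t/2), Real.exp (-c*(t-τ)) * (1+τ)^(-(3/4:ℝ))) +
      ∫ τ in (t/2)..t, Real.exp (-c*(t-τ)) * (1+τ)^(-(3/4:ℝ)) := by
    rw [intervalIntegral.integral_add_adjacent_intervals
      (convInteg c t 0 (t/2) le_rfl (by linarith))
      (convInteg c t (t/2) t (by linarith) (by linarith))]
  rw [hsplit]
  -- piece 1
  have hp1 : (∫ τ in (0:ℝ)..(t/2), Real.exp (-c*(t-τ)) * (1+τ)^(-(3/4:ℝ))) ≤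
      (1/(c*m)) * (1+t)^(-(3/4:ℝ)) := by
    have hmono : (∫ τ in (0:ℝ)..(t/2), Real.exp (-c*(t-τ)) * (1+τ)^(-(3/4:ℝ))) ≤
        ∫ τ in (0:ℝ)..(t/2), Real.exp (-c*(t-τ)) := by
      apply intervalIntegral.integral_mono_on (by linarith)
        (convInteg c t 0 (t/2) le_rfl (by linarith))
        ((Real.continuous_exp.comp (by continuity)).intervalIntegrable _ _)
      intro x hx
      have hx0 : (0:ℝ) ≤ x := hx.1
      calc Real.exp (-c*(t-x)) * (1+x)^(-(3/4:ℝ))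
          ≤ Real.exp (-c*(t-x)) * 1 := by
            apply mul_le_mul_of_nonneg_left _ (Real.exp_nonneg _)
            exact Real.rpow_le_one_of_one_le_of_nonpos (by linarith) (by norm_num)
        _ = Real.exp (-c*(t-x)) := mul_one _
    rw [expIntEq c t 0 (t/2) hc] at hmono
    have h2 : (Real.exp (-c*(t-t/2)) - Real.exp (-c*(t-0)))/c ≤ Real.exp (-(c*(t/2)))/c := by
      have : -c*(t-t/2) = -(c*(t/2)) := by ring
      rw [this]
      gcongr
      exact sub_le_self _ (Real.exp_nonneg _)
    -- exp(-ct/2) ≤ (1/m)(1+t)^{-3/4}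
    have h34 : (1+t)^((3:ℝ)/4) ≤ 1+t := by
      calc (1+t)^((3:ℝ)/4) ≤ (1+t)^(1:ℝ) :=
            Real.rpow_le_rpow_of_exponent_le (by linarith) (by norm_num)
        _ = 1+t := Real.rpow_one _
    have key : m * (1+t)^((3:ℝ)/4) ≤ Real.exp (c*(t/2)) := by
      have he : c*(t/2) + 1 ≤ Real.exp (c*(t/2)) := Real.add_one_le_exp _
      nlinarith [mul_le_mul_of_nonneg_left h34 hm0.le]
    have hinv : Real.exp (-(c*(t/2))) ≤ (1/m) * (1+t)^(-(3/4:ℝ)) := by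
      rw [Real.exp_neg, Real.rpow_neg h1t.le]
      have hpos : (0:ℝ) < m * (1+t)^((3:ℝ)/4) := by positivity
      have h5 := inv_anti₀ hpos key
      rw [mul_inv] at h5
      rw [one_div]
      exact h5
    calc (∫ τ in (0:ℝ)..(t/2), Real.exp (-c*(t-τ)) * (1+τ)^(-(3/4:ℝ)))
        ≤ Real.exp (-(c*(t/2)))/c := le_trans hmono h2
      _ ≤ ((1/m) * (1+t)^(-(3/4:ℝ)))/c := by
            apply div_le_div_of_nonneg_right hinv hc.le
      _ = (1/(c*m)) * (1+t)^(-(3/4:ℝ)) := by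
            rw [div_eq_mul_inv, one_div, one_div, mul_inv]; ring
  -- piece 2
  have hp2 : (∫ τ in (t/2)..t, Real.exp (-c*(t-τ)) * (1+τ)^(-(3/4:ℝ))) ≤
      (2/c) * (1+t)^(-(3/4:ℝ)) := by
    have hbase : (0:ℝ) < 1 + t/2 := by linarith
    have hmono : (∫ τ in (t/2)..t, Real.exp (-c*(t-τ)) * (1+τ)^(-(3/4:ℝ))) ≤
        ∫ τ in (t/2)..t, Real.exp (-c*(t-τ)) * (1+t/2)^(-(3/4:ℝ)) := by
      apply intervalIntegral.integral_mono_on (by linarith)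
        (convInteg c t (t/2) t (by linarith) (by linarith))
        (((Real.continuous_exp.comp (by continuity)).mul continuous_const).intervalIntegrable _ _)
      intro x hx
      apply mul_le_mul_of_nonneg_left _ (Real.exp_nonneg _)
      exact Real.rpow_le_rpow_of_nonpos hbase (by linarith [hx.1]) (by norm_num)
    have hint : (∫ τ in (t/2)..t, Real.exp (-c*(t-τ)) * (1+t/2)^(-(3/4:ℝ))) ≤
        (1/c) * (1+t/2)^(-(3/4:ℝ)) := by
      rw [intervalIntegral.integral_mul_const, expIntEq c t (t/2) t hc]
      apply mul_le_mul_of_nonneg_right _ (rpow_pos_of_pos hbase _).le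
      have : -c*(t-t) = 0 := by ring
      rw [this, Real.exp_zero]
      have : (0:ℝ) < Real.exp (-c*(t-t/2)) := Real.exp_pos _
      rw [div_le_div_iff₀ hc hc]
      nlinarith
    have hhalf : (1+t/2)^(-(3/4:ℝ)) ≤ 2 * (1+t)^(-(3/4:ℝ)) := by
      have h1 : (1+t/2)^(-(3/4:ℝ)) ≤ ((1+t)/2)^(-(3/4:ℝ)) :=
        Real.rpow_le_rpow_of_nonpos (by linarith) (by linarith) (by norm_num)
      have h2 : ((1+t)/2)^(-(3/4:ℝ)) = (1+t)^(-(3/4:ℝ)) / (2:ℝ)^(-(3/4:ℝ)) :=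
        Real.div_rpow h1t.le (by norm_num : (0:ℝ) ≤ 2) (-(3/4:ℝ))
      have h3 : (1+t)^(-(3/4:ℝ)) / (2:ℝ)^(-(3/4:ℝ)) = (1+t)^(-(3/4:ℝ)) * (2:ℝ)^((3:ℝ)/4) := by
        rw [Real.rpow_neg (by norm_num : (0:ℝ) ≤ 2), div_eq_mul_inv, inv_inv]
      have h4 : (2:ℝ)^((3:ℝ)/4) ≤ 2 := by
        calc (2:ℝ)^((3:ℝ)/4) ≤ (2:ℝ)^(1:ℝ) :=
              Real.rpow_le_rpow_of_exponent_le one_le_two (by norm_num)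
          _ = 2 := Real.rpow_one 2
      calc (1+t/2)^(-(3/4:ℝ)) ≤ ((1+t)/2)^(-(3/4:ℝ)) := h1
        _ = (1+t)^(-(3/4:ℝ)) * (2:ℝ)^((3:ℝ)/4) := by rw [h2, h3]
        _ ≤ (1+t)^(-(3/4:ℝ)) * 2 := mul_le_mul_of_nonneg_left h4 hr.le
        _ = 2 * (1+t)^(-(3/4:ℝ)) := mul_comm _ _
    calc (∫ τ in (t/2)..t, Real.exp (-c*(t-τ)) * (1+τ)^(-(3/4:ℝ)))
        ≤ (1/c) * (1+t/2)^(-(3/4:ℝ)) := le_trans hmono hint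
      _ ≤ (1/c) * (2 * (1+t)^(-(3/4:ℝ))) := by
          apply mul_le_mul_of_nonneg_left hhalf (by positivity)
      _ = (2/c) * (1+t)^(-(3/4:ℝ)) := by ring
  calc _ ≤ (1/(c*m)) * (1+t)^(-(3/4:ℝ)) + (2/c) * (1+t)^(-(3/4:ℝ)) := add_le_add hp1 hp2
    _ = (1/(c * m) + 2/c) * (1+t)^(-(3/4:ℝ)) := by ring


set_option maxHeartbeats 1000000 in
/-- Duhamel decay for a damped ODE inequality: if `y ≥ 0` is continuous on `[0,∞)` and
`y(t) ≤ e^{−ct} y(0) + ∫_0^t e^{−c(t−τ)} (A(1+τ)^{−3/4} + ε(1+τ)^{−1/2} y(τ)) dτ`,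
then for `ε` small (depending only on `c`) one has
`y(t) ≤ C (y(0) + A) (1+t)^{−3/4}`. -/
theorem stmt12 (c : ℝ) (hc : 0 < c) :
    ∃ C : ℝ, 0 < C ∧ ∃ ε₀ : ℝ, 0 < ε₀ ∧
      ∀ (y : ℝ → ℝ) (A ε : ℝ),
        ContinuousOn y (Set.Ici 0) →
        (∀ t, 0 ≤ t → 0 ≤ y t) →
        0 ≤ A → 0 ≤ ε →
        (∀ t, 0 ≤ t →
          y t ≤ Real.exp (-c * t) * y 0 +
            ∫ τ in (0 : ℝ)..t, Real.exp (-c * (t - τ)) *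
              (A * (1 + τ) ^ (-(3 / 4 : ℝ)) + ε * (1 + τ) ^ (-(1 / 2 : ℝ)) * y τ)) →
        ε ≤ ε₀ →
        ∀ t, 0 ≤ t → y t ≤ C * (y 0 + A) * (1 + t) ^ (-(3 / 4 : ℝ)) := by
  set m := min 1 (c/2) with hm
  have hm0 : 0 < m := lt_min one_pos (by linarith)
  have hm1 : m ≤ 1 := min_le_left _ _
  have hm2 : m ≤ c/2 := min_le_right _ _
  set K := 1/(c*m) + 2/c with hKdef
  have hK0 : 0 < K := by positivity
  refine ⟨2*(1/m + K), by positivity, 1/(2*K), by positivity, ?_⟩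
  intro y A ε hy hy0 hA hε hineq hεsmall t ht
  -- maximum of g on [0,t]
  have hgcont : ContinuousOn (fun s => y s * (1+s)^((3:ℝ)/4)) (Set.Icc 0 t) := by
    apply ContinuousOn.mul (hy.mono Set.Icc_subset_Ici_self)
    apply ContinuousOn.rpow_const ((continuous_const.add continuous_id).continuousOn)
    intro x hx
    left
    simp only [Pi.add_apply, id_eq]
    intro h; have := hx.1; linarith
  obtain ⟨t₀, ht₀mem, ht₀max⟩ :=
    isCompact_Icc.exists_isMaxOn (Set.nonempty_Icc.mpr ht) hgcont
  have ht₀0 : (0:ℝ) ≤ t₀ := ht₀mem.1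
  have h1t₀ : (0:ℝ) < 1 + t₀ := by linarith
  set M := y t₀ * (1+t₀)^((3:ℝ)/4) with hMdef
  have hM0 : 0 ≤ M := mul_nonneg (hy0 t₀ ht₀0) (rpow_pos_of_pos h1t₀ _).le
  -- pointwise bound
  have hyM : ∀ τ ∈ Set.Icc (0:ℝ) t, y τ ≤ M * (1+τ)^(-(3/4:ℝ)) := by
    intro τ hτ
    have h := ht₀max hτ
    have h1τ : (0:ℝ) < 1+τ := by linarith [hτ.1]
    have hpr : (0:ℝ) < (1+τ)^((3:ℝ)/4) := rpow_pos_of_pos h1τ _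
    have hle : y τ * (1+τ)^((3:ℝ)/4) ≤ M := h
    rw [Real.rpow_neg h1τ.le]
    calc y τ = y τ * (1+τ)^((3:ℝ)/4) * ((1+τ)^((3:ℝ)/4))⁻¹ := by field_simp
      _ ≤ M * ((1+τ)^((3:ℝ)/4))⁻¹ :=
          mul_le_mul_of_nonneg_right hle (inv_nonneg.mpr hpr.le)
  -- the main estimate at t₀
  have hIcc : Set.uIcc (0:ℝ) t₀ = Set.Icc 0 t₀ := Set.uIcc_of_le ht₀0
  have hIccsub : Set.Icc (0:ℝ) t₀ ⊆ Set.Icc 0 t := Set.Icc_subset_Icc le_rfl ht₀mem.2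
  have integ1 : IntervalIntegrable (fun τ => Real.exp (-c * (t₀ - τ)) *
      (A * (1 + τ) ^ (-(3 / 4 : ℝ)) + ε * (1 + τ) ^ (-(1 / 2 : ℝ)) * y τ))
      MeasureTheory.volume 0 t₀ := by
    apply ContinuousOn.intervalIntegrable
    rw [hIcc]
    have hrp : ∀ (e : ℝ), ContinuousOn (fun τ : ℝ => (1+τ)^(e:ℝ)) (Set.Icc (0:ℝ) t₀) := by
      intro e
      apply ContinuousOn.rpow_const ((continuous_const.add continuous_id).continuousOn)
      intro x hx
      left
      simp only [Pi.add_apply, id_eq]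
      intro h; have := hx.1; linarith
    apply ContinuousOn.mul (Continuous.continuousOn (by continuity))
    exact ((continuousOn_const.mul (hrp _)).add
      ((continuousOn_const.mul (hrp _)).mul
        (hy.mono (Set.Icc_subset_Ici_self))))
  have hptwise : ∀ x ∈ Set.Icc (0:ℝ) t₀,
      Real.exp (-c * (t₀ - x)) *
        (A * (1 + x) ^ (-(3 / 4 : ℝ)) + ε * (1 + x) ^ (-(1 / 2 : ℝ)) * y x) ≤
      (A + ε*M) * (Real.exp (-c*(t₀ - x)) * (1+x)^(-(3/4:ℝ))) := by
    intro x hx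
    have h1x : (0:ℝ) < 1 + x := by linarith [hx.1]
    have hq : (1+x)^(-(1/2:ℝ)) ≤ 1 :=
      Real.rpow_le_one_of_one_le_of_nonpos (by linarith [hx.1]) (by norm_num)
    have hyx : y x ≤ M * (1+x)^(-(3/4:ℝ)) := hyM x (hIccsub hx)
    have hyx0 : 0 ≤ y x := hy0 x hx.1
    have h2 : ε * (1 + x) ^ (-(1/2:ℝ)) * y x ≤ ε * M * (1+x)^(-(3/4:ℝ)) := by
      calc ε * (1 + x) ^ (-(1/2:ℝ)) * y x ≤ ε * 1 * y x := by
            apply mul_le_mul_of_nonneg_right _ hyx0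
            exact mul_le_mul_of_nonneg_left hq hε
        _ = ε * y x := by ring
        _ ≤ ε * (M * (1+x)^(-(3/4:ℝ))) := mul_le_mul_of_nonneg_left hyx hε
        _ = ε * M * (1+x)^(-(3/4:ℝ)) := by ring
    have : A * (1 + x) ^ (-(3 / 4 : ℝ)) + ε * (1 + x) ^ (-(1 / 2 : ℝ)) * y x ≤
        (A + ε*M) * (1+x)^(-(3/4:ℝ)) := by nlinarith [h2]
    calc Real.exp (-c * (t₀ - x)) *
          (A * (1 + x) ^ (-(3 / 4 : ℝ)) + ε * (1 + x) ^ (-(1 / 2 : ℝ)) * y x)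
        ≤ Real.exp (-c * (t₀ - x)) * ((A + ε*M) * (1+x)^(-(3/4:ℝ))) :=
          mul_le_mul_of_nonneg_left this (Real.exp_nonneg _)
      _ = (A + ε*M) * (Real.exp (-c*(t₀ - x)) * (1+x)^(-(3/4:ℝ))) := by ring
  have hAM0 : 0 ≤ A + ε*M := by positivity
  have hIbound : (∫ τ in (0:ℝ)..t₀, Real.exp (-c * (t₀ - τ)) *
      (A * (1 + τ) ^ (-(3 / 4 : ℝ)) + ε * (1 + τ) ^ (-(1 / 2 : ℝ)) * y τ)) ≤
      (A + ε*M) * (K * (1+t₀)^(-(3/4:ℝ))) := by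
    have step1 : (∫ τ in (0:ℝ)..t₀, Real.exp (-c * (t₀ - τ)) *
        (A * (1 + τ) ^ (-(3 / 4 : ℝ)) + ε * (1 + τ) ^ (-(1 / 2 : ℝ)) * y τ)) ≤
        ∫ τ in (0:ℝ)..t₀, (A + ε*M) * (Real.exp (-c*(t₀-τ)) * (1+τ)^(-(3/4:ℝ))) := by
      apply intervalIntegral.integral_mono_on ht₀0 integ1
        ((convInteg c t₀ 0 t₀ le_rfl ht₀0).const_mul (A + ε*M)) hptwise
    have step2 : (∫ τ in (0:ℝ)..t₀, (A + ε*M) * (Real.exp (-c*(t₀-τ)) * (1+τ)^(-(3/4:ℝ)))) =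
        (A + ε*M) * ∫ τ in (0:ℝ)..t₀, Real.exp (-c*(t₀-τ)) * (1+τ)^(-(3/4:ℝ)) :=
      intervalIntegral.integral_const_mul _ _
    rw [step2] at step1
    exact step1.trans (mul_le_mul_of_nonneg_left (convBound c hc t₀ ht₀0) hAM0)
  have hmain := hineq t₀ ht₀0
  -- multiply by (1+t₀)^{3/4}
  have hprod : (1+t₀)^(-(3/4:ℝ)) * (1+t₀)^((3:ℝ)/4) = 1 := by
    rw [← Real.rpow_add h1t₀]
    norm_num
  have hexp34 : Real.exp (-c*t₀) * (1+t₀)^((3:ℝ)/4) ≤ 1/m := by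
    have h34 : (1+t₀)^((3:ℝ)/4) ≤ 1+t₀ := by
      calc (1+t₀)^((3:ℝ)/4) ≤ (1+t₀)^(1:ℝ) :=
            Real.rpow_le_rpow_of_exponent_le (by linarith) (by norm_num)
        _ = 1+t₀ := Real.rpow_one _
    have he : c*t₀ + 1 ≤ Real.exp (c*t₀) := Real.add_one_le_exp _
    have hkey : m * (1+t₀)^((3:ℝ)/4) ≤ Real.exp (c*t₀) := by
      nlinarith [mul_le_mul_of_nonneg_left h34 hm0.le]
    rw [show -c*t₀ = -(c*t₀) by ring, Real.exp_neg, le_div_iff₀ hm0]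
    have hpos : (0:ℝ) < Real.exp (c*t₀) := Real.exp_pos _
    calc (Real.exp (c*t₀))⁻¹ * (1+t₀)^((3:ℝ)/4) * m
        = (m * (1+t₀)^((3:ℝ)/4)) * (Real.exp (c*t₀))⁻¹ := by ring
      _ ≤ Real.exp (c*t₀) * (Real.exp (c*t₀))⁻¹ :=
          mul_le_mul_of_nonneg_right hkey (inv_nonneg.mpr hpos.le)
      _ = 1 := mul_inv_cancel₀ hpos.ne'
  have hy00 : 0 ≤ y 0 := hy0 0 le_rfl
  have hp34 : (0:ℝ) ≤ (1+t₀)^((3:ℝ)/4) := (rpow_pos_of_pos h1t₀ _).le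
  have hstep : M ≤ (1/m) * y 0 + (A + ε*M) * K := by
    have hmul := mul_le_mul_of_nonneg_right hmain hp34
    calc M ≤ (Real.exp (-c*t₀) * y 0 +
          ∫ τ in (0:ℝ)..t₀, Real.exp (-c * (t₀ - τ)) *
            (A * (1 + τ) ^ (-(3 / 4 : ℝ)) + ε * (1 + τ) ^ (-(1 / 2 : ℝ)) * y τ)) *
          (1+t₀)^((3:ℝ)/4) := hmul
      _ = (Real.exp (-c*t₀) * (1+t₀)^((3:ℝ)/4)) * y 0 +
          (∫ τ in (0:ℝ)..t₀, Real.exp (-c * (t₀ - τ)) *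
            (A * (1 + τ) ^ (-(3 / 4 : ℝ)) + ε * (1 + τ) ^ (-(1 / 2 : ℝ)) * y τ)) *
          (1+t₀)^((3:ℝ)/4) := by ring
      _ ≤ (1/m) * y 0 + ((A + ε*M) * (K * (1+t₀)^(-(3/4:ℝ)))) * (1+t₀)^((3:ℝ)/4) :=
          add_le_add (mul_le_mul_of_nonneg_right hexp34 hy00)
            (mul_le_mul_of_nonneg_right hIbound hp34)
      _ = (1/m) * y 0 + (A + ε*M) * K * ((1+t₀)^(-(3/4:ℝ)) * (1+t₀)^((3:ℝ)/4)) := by ring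
      _ = (1/m) * y 0 + (A + ε*M) * K := by rw [hprod, mul_one]
  have hKε : K * ε ≤ 1/2 := by
    have := mul_le_mul_of_nonneg_left hεsmall hK0.le
    calc K * ε ≤ K * (1/(2*K)) := this
      _ = 1/2 := by field_simp
  have hMfinal : M ≤ 2*((1/m) * y 0 + K * A) := by
    have hb : K * ε * M ≤ (1/2) * M := mul_le_mul_of_nonneg_right hKε hM0
    have hring : (A + ε*M) * K = K * A + K * ε * M := by ring
    rw [hring] at hstep
    linarith
  have hrt : (0:ℝ) ≤ (1+t)^(-(3/4:ℝ)) := (rpow_pos_of_pos (by linarith) _).le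
  have hMC : M ≤ 2*(1/m + K) * (y 0 + A) := by
    have h1 : (0:ℝ) ≤ 1/m := by positivity
    have h2 : 0 ≤ (1/m) * A := mul_nonneg h1 hA
    have h3 : 0 ≤ K * y 0 := mul_nonneg hK0.le hy00
    have heq : 2*(1/m + K) * (y 0 + A) =
        2*((1/m) * y 0 + K * A) + 2*((1/m)*A + K*y 0) := by ring
    rw [heq]
    exact hMfinal.trans (le_add_of_nonneg_right
      (mul_nonneg (by norm_num) (add_nonneg h2 h3)))
  calc y t ≤ M * (1+t)^(-(3/4:ℝ)) := hyM t ⟨ht, le_rfl⟩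
    _ ≤ (2*(1/m + K) * (y 0 + A)) * (1+t)^(-(3/4:ℝ)) :=
        mul_le_mul_of_nonneg_right hMC hrt
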